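/- The rational functions x ↦ 1/K_{ξ₁}(x), …, x ↦ 1/K_{ξₙ}(x), where K_ξ(x) = Σ_{j=1}^d xⱼ²/(ξ − aⱼ) and ξ₁, …, ξₙ are pairwise distinct real numbers distinct from a₁, …, a_d, are linearly independent over ℝ. -/

import Mathlib

open Finset

/-- The functions `x ↦ 1/K_{ξₖ}(x)`, for pairwise distinct `ξₖ` distinct from
the `aⱼ`, are linearly independent over `ℝ` as functions on the set where all `K_{ξₖ} ≠ 0`. -/
theorem stmt4 {d n : ℕ} (hd : 2 ≤ d) (a : Fin d → ℝ) (ha : StrictMono a)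
    (ξ : Fin n → ℝ) (hξ : Function.Injective ξ) (hξa : ∀ k j, ξ k ≠ a j)
    (K : ℝ → (Fin d → ℝ) → ℝ) (hK : ∀ t x, K t x = ∑ j, x j ^ 2 / (t - a j)) :
    LinearIndependent ℝ
      (fun k : Fin n =>
        (fun x : {x : Fin d → ℝ // ∀ k', K (ξ k') x ≠ 0} => (K (ξ k) x.1)⁻¹)) := by
  rw [Fintype.linearIndependent_iff]
  intro c hc k0
  set j0 : Fin d := ⟨0, by omega⟩ with hj0def
  set j1 : Fin d := ⟨1, by omega⟩ with hj1def
  have hj01 : j0 ≠ j1 := by simp [hj0def, hj1def, Fin.ext_iff]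
  have ha01 : a j0 < a j1 := ha (by simp [hj0def, hj1def, Fin.lt_def])
  set B : Fin n → ℝ := fun k => ξ k - a j0 with hBdef
  set Cc : Fin n → ℝ := fun k => ξ k - a j1 with hCdef
  have hB : ∀ k, B k ≠ 0 := fun k => sub_ne_zero.2 (hξa k j0)
  have hC : ∀ k, Cc k ≠ 0 := fun k => sub_ne_zero.2 (hξa k j1)
  set pole : Fin n → ℝ := fun k => -Cc k / B k with hpdef
  have hpole_inj : Function.Injective pole := by
    intro i k h
    apply hξ
    simp only [hpdef, div_eq_div_iff (hB i) (hB k)] at h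
    have h2 : (a j1 - a j0) * (ξ k - ξ i) = 0 := by
      simp only [hBdef, hCdef] at h
      linear_combination h
    rcases mul_eq_zero.1 h2 with h3 | h3
    · exact absurd (by linarith : a j0 = a j1) ha01.ne
    · linarith
  set P : Polynomial ℝ := ∑ k, Polynomial.C (c k * B k * Cc k) *
      ∏ i ∈ univ.erase k, (Polynomial.C (B i) * Polynomial.X + Polynomial.C (Cc i)) with hPdef
  have hPeval : ∀ u, P.eval u =
      ∑ k, c k * B k * Cc k * ∏ i ∈ univ.erase k, (B i * u + Cc i) := by
    intro u
    simp [hPdef, Polynomial.eval_finset_sum, Polynomial.eval_prod]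
  have hP0 : ∀ u, 0 ≤ u → (∀ k, B k * u + Cc k ≠ 0) → P.eval u = 0 := by
    intro u hu hDu
    set x : Fin d → ℝ := fun j => if j = j0 then 1 else if j = j1 then Real.sqrt u else 0
      with hxdef
    have hKx : ∀ k, K (ξ k) x = (B k * u + Cc k) / (B k * Cc k) := by
      intro k
      rw [hK]
      have hsum : ∀ j ∈ univ, x j ^ 2 / (ξ k - a j) =
          (if j = j0 then 1 / (ξ k - a j0) else 0) +
          (if j = j1 then u / (ξ k - a j1) else 0) := by
        intro j _
        by_cases h0 : j = j0
        · subst h0; simp [hxdef, hj01]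
        · by_cases h1 : j = j1
          · subst h1; simp [hxdef, h0, Real.sq_sqrt hu]
          · simp [hxdef, h0, h1]
      rw [Finset.sum_congr rfl hsum, Finset.sum_add_distrib]
      simp only [Finset.sum_ite_eq', Finset.mem_univ, if_true]
      rw [div_add_div _ _ (hB k) (hC k)]
      ring
    have hxmem : ∀ k', K (ξ k') x ≠ 0 := by
      intro k'
      rw [hKx k']
      exact div_ne_zero (hDu k') (mul_ne_zero (hB k') (hC k'))
    have hcx := congrFun hc ⟨x, hxmem⟩
    simp only [Finset.sum_apply, Pi.smul_apply, smul_eq_mul, Pi.zero_apply] at hcx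
    rw [hPeval]
    have key : ∀ k ∈ univ, c k * B k * Cc k * ∏ i ∈ univ.erase k, (B i * u + Cc i)
        = (c k * (K (ξ k) x)⁻¹) * ∏ i ∈ univ, (B i * u + Cc i) := by
      intro k _
      rw [hKx k, inv_div, ← Finset.prod_erase_mul univ _ (mem_univ k)]
      field_simp [hDu k]
      simp only [mul_comm (B _) u]
    rw [Finset.sum_congr rfl key, ← Finset.sum_mul, hcx, zero_mul]
  have hPzero : P = 0 := by
    apply Polynomial.eq_zero_of_infinite_isRoot
    apply Set.Infinite.mono (s := Set.Ici (0:ℝ) \ Set.range pole)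
    · intro u hu
      refine hP0 u hu.1 (fun k hk => hu.2 ⟨k, ?_⟩)
      show -Cc k / B k = u
      rw [div_eq_iff (hB k)]
      linear_combination -hk
    · exact (Set.Ici_infinite (0:ℝ)).diff (Set.finite_range pole)
  have hk0fac : B k0 * pole k0 + Cc k0 = 0 := by
    show B k0 * (-Cc k0 / B k0) + Cc k0 = 0
    have hb := hB k0
    field_simp
    ring
  have hsum0 : ∑ k, c k * B k * Cc k * ∏ i ∈ univ.erase k, (B i * pole k0 + Cc i) = 0 := by
    rw [← hPeval, hPzero, Polynomial.eval_zero]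
  rw [Finset.sum_eq_single_of_mem k0 (mem_univ k0) (by
    intro k _ hk
    rw [Finset.prod_eq_zero (Finset.mem_erase.2 ⟨Ne.symm hk, mem_univ k0⟩) hk0fac, mul_zero])]
    at hsum0
  have hprodne : ∏ i ∈ univ.erase k0, (B i * pole k0 + Cc i) ≠ 0 := by
    rw [Finset.prod_ne_zero_iff]
    intro i hi h0
    refine (Finset.mem_erase.1 hi).1 (hpole_inj ?_)
    show -Cc i / B i = pole k0
    rw [div_eq_iff (hB i)]
    linear_combination -h0
  have := mul_ne_zero (mul_ne_zero (hB k0) (hC k0)) hprodne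
  have hck : c k0 * (B k0 * Cc k0 * ∏ i ∈ univ.erase k0, (B i * pole k0 + Cc i)) = 0 := by
    linarith [hsum0]
  exact (mul_eq_zero.1 hck).resolve_right this
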